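/- Let ξ_1,…,ξ_n be i.i.d. Bernoulli(p), 0 < p < 1, q = 1−p, and 2 ≤ r ≤ n. With Ĩ = ∑_{(a,s)∈B̃_n} P(Ã_{a,s}) where Ã_{a,s} = {ξ_a = 0, ξ_{a+s mod n} = 1, …, ξ_{a+rs mod n} = 1} and B̃_n = {(a,s): 1 ≤ a ≤ n, 1 ≤ s ≤ ⌊n/2⌋, gcd(n,s) < n/r}, one has (1 − (r+1)²/(2n)) · qn²p^r/2 ≤ Ĩ ≤ qn²p^r/2. -/

import Mathlib

open MeasureTheory ProbabilityTheory

/-- Residue of `x` mod `n` taken in `{1,…,n}`. -/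
def amod (x n : ℕ) : ℕ := if x % n = 0 then n else x % n

/-- `B̃_n` : pairs `(a,s)` with `1 ≤ a ≤ n`, `1 ≤ s ≤ ⌊n/2⌋` and `gcd(n,s) < n/r`. -/
def Btilde (n r : ℕ) : Finset (ℕ × ℕ) :=
  (Finset.Icc 1 n ×ˢ Finset.Icc 1 (n / 2)).filter fun q : ℕ × ℕ => Nat.gcd n q.2 * r < n

lemma amod_eq_mod {n x y : ℕ} (hn : 0 < n) (h : amod x n = amod y n) : x % n = y % n := by
  unfold amod at h
  have hx := Nat.mod_lt x hn
  have hy := Nat.mod_lt y hn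
  split_ifs at h <;> omega

lemma amod_self {a n : ℕ} (ha1 : 1 ≤ a) (han : a ≤ n) : amod a n = a := by
  unfold amod
  rcases eq_or_lt_of_le han with rfl | h
  · simp
  · rw [Nat.mod_eq_of_lt h]
    split_ifs <;> omega

lemma g_injOn {n r a s : ℕ} (hn : 0 < n) (hs : 1 ≤ s)
    (hgcd : Nat.gcd n s * r < n) :
    Set.InjOn (fun j => amod (a + j * s) n) (Finset.range (r + 1)) := by
  have key : ∀ j k : ℕ, j < k → k ≤ r → amod (a + j * s) n ≠ amod (a + k * s) n := by
    intro j k hjk hk h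
    have hmod := amod_eq_mod hn h
    have hdvd : n ∣ (k - j) * s := by
      have h1 : a + j * s ≤ a + k * s := by
        have := Nat.mul_le_mul_right s (le_of_lt hjk); omega
      have h2 : (a + j * s) ≡ (a + k * s) [MOD n] := hmod
      have := (Nat.modEq_iff_dvd' h1).mp h2
      have heq : a + k * s - (a + j * s) = (k - j) * s := by
        rw [Nat.sub_mul]; omega
      rwa [heq] at this
    set d := Nat.gcd n s with hd
    have hd0 : 0 < d := Nat.gcd_pos_of_pos_right n hs
    have hdn : d ∣ n := Nat.gcd_dvd_left n s
    have hds : d ∣ s := Nat.gcd_dvd_right n s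
    have hcop : Nat.Coprime (n / d) (s / d) := Nat.coprime_div_gcd_div_gcd hd0
    have hdvd2 : n / d ∣ (k - j) * (s / d) := by
      have : d * (n / d) ∣ (k - j) * (s / d) * d := by
        rw [Nat.mul_div_cancel' hdn]
        calc n ∣ (k - j) * s := hdvd
          _ = (k - j) * (s / d) * d := by rw [mul_assoc, Nat.div_mul_cancel hds]
      exact (Nat.mul_dvd_mul_iff_left hd0).mp (by rwa [mul_comm ((k - j) * (s / d)) d] at this)
    have hdvd3 : n / d ∣ (k - j) := Nat.Coprime.dvd_of_dvd_mul_right hcop hdvd2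
    have hlt : k - j < n / d := by
      have : r < n / d := Nat.lt_div_iff_mul_lt' hdn r |>.mpr (by omega)
      omega
    have hpos : 0 < k - j := by omega
    have := Nat.le_of_dvd hpos hdvd3
    omega
  intro j hj k hk h
  simp only [Finset.coe_range, Set.mem_Iio] at hj hk
  by_contra hne
  rcases Nat.lt_or_ge j k with hlt | hge
  · exact key j k hlt (by omega) h
  · exact key k j (by omega) (by omega) h.symm

lemma meas_event {Ω : Type*} [MeasurableSpace Ω] (μ : Measure Ω) [IsProbabilityMeasure μ]
    (p : ℝ) (hp0 : 0 ≤ p) (r : ℕ)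
    (ξ : ℕ → Ω → Bool) (hmeas : ∀ i, Measurable (ξ i))
    (hindep : iIndepFun ξ μ)
    (hbern : ∀ i, μ {ω | ξ i ω = true} = ENNReal.ofReal p)
    (g : ℕ → ℕ) (hginj : Set.InjOn g (Finset.range (r + 1))) :
    μ {ω | ξ (g 0) ω = false ∧ ∀ j : ℕ, 1 ≤ j → j ≤ r → ξ (g j) ω = true}
      = ENNReal.ofReal (1 - p) * ENNReal.ofReal p ^ r := by
  classical
  set S : Finset ℕ := (Finset.range (r + 1)).image g with hS
  set f' : ℕ → Set Ω := fun i => if i = g 0 then {ω | ξ i ω = false} else {ω | ξ i ω = true}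
    with hf'
  have hgne : ∀ j : ℕ, 1 ≤ j → j ≤ r → g j ≠ g 0 := by
    intro j h1 h2 h
    have := hginj (by simp; omega) (by simp) h
    omega
  have hset : {ω | ξ (g 0) ω = false ∧ ∀ j : ℕ, 1 ≤ j → j ≤ r → ξ (g j) ω = true}
      = ⋂ i ∈ S, f' i := by
    ext ω
    simp only [Set.mem_setOf_eq, Set.mem_iInter, hS, Finset.mem_image, Finset.mem_range]
    constructor
    · rintro ⟨h0, h1⟩ i ⟨j, hj, rfl⟩
      by_cases hij : g j = g 0
      · simp only [hf', if_pos hij, Set.mem_setOf_eq, hij]; exact h0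
      · have hj1 : 1 ≤ j := by
          by_contra hc; push_neg at hc; interval_cases j; exact hij rfl
        simp only [hf', if_neg hij, Set.mem_setOf_eq]
        exact h1 j hj1 (by omega)
    · intro h
      constructor
      · have := h (g 0) ⟨0, by omega, rfl⟩
        simpa only [hf', if_pos rfl, Set.mem_setOf_eq] using this
      · intro j h1 h2
        have := h (g j) ⟨j, by omega, rfl⟩
        simpa only [hf', if_neg (hgne j h1 h2), Set.mem_setOf_eq] using this
  have hmeasS : ∀ i ∈ S, MeasurableSet[(inferInstance : MeasurableSpace Bool).comap (ξ i)]
      (f' i) := by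
    intro i _
    by_cases hi : i = g 0
    · exact ⟨{false}, trivial, by simp [hf', hi]; ext ω; simp⟩
    · exact ⟨{true}, trivial, by simp [hf', hi]; ext ω; simp⟩
  have hprod := hindep.meas_biInter (S := S) hmeasS
  rw [hset, hprod]
  have hμfalse : ∀ i, μ {ω | ξ i ω = false} = ENNReal.ofReal (1 - p) := by
    intro i
    have hc : {ω | ξ i ω = false} = {ω | ξ i ω = true}ᶜ := by
      ext ω
      simp only [Set.mem_setOf_eq, Set.mem_compl_iff, Bool.not_eq_true]
    have hms : MeasurableSet {ω | ξ i ω = true} := by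
      have : {ω | ξ i ω = true} = ξ i ⁻¹' {true} := by ext ω; simp
      rw [this]; exact (hmeas i) (by trivial)
    rw [hc, measure_compl hms (measure_ne_top μ _), hbern i, measure_univ,
      ENNReal.ofReal_sub 1 hp0, ENNReal.ofReal_one]
  rw [Finset.prod_image (fun x hx y hy h => hginj hx hy h)]
  rw [Finset.prod_range_succ']
  have h1 : ∀ j ∈ Finset.range r, μ (f' (g (j + 1))) = ENNReal.ofReal p := by
    intro j hj
    simp only [Finset.mem_range] at hj
    rw [hf']
    simp only [if_neg (hgne (j + 1) (by omega) (by omega))]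
    exact hbern _
  rw [Finset.prod_congr rfl h1, Finset.prod_const, Finset.card_range]
  simp only [hf', if_pos rfl]
  rw [hμfalse, mul_comm]

lemma sum_halves_le {r : ℕ} (hr : 2 ≤ r) :
    (∑ e ∈ Finset.Icc 2 r, e / 2) * 4 ≤ (r + 1) ^ 2 - 2 := by
  induction r, hr using Nat.le_induction with
  | base => decide
  | succ m hm ih =>
    rw [Finset.sum_Icc_succ_top (by omega)]
    have e1 : (m + 1) ^ 2 = m * m + 2 * m + 1 := by ring
    have e2 : (m + 1 + 1) ^ 2 = m * m + 4 * m + 4 := by ring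
    omega

lemma bad_card {n r : ℕ} (hr : 2 ≤ r) (hn : 2 ≤ n) :
    ((Finset.Icc 1 (n / 2)).filter fun s => ¬ Nat.gcd n s * r < n).card * 4
      ≤ (r + 1) ^ 2 - 2 := by
  set Bad := (Finset.Icc 1 (n / 2)).filter fun s => ¬ Nat.gcd n s * r < n with hB
  set T := (Finset.Icc 2 r).sigma fun e => Finset.Icc 1 (e / 2) with hT
  have hle : Bad.card ≤ T.card := by
    apply Finset.card_le_card_of_injOn (fun s => ⟨n / Nat.gcd n s, s / Nat.gcd n s⟩)
    · intro s hs
      simp only [hB, Finset.mem_coe, Finset.mem_filter, Finset.mem_Icc, not_lt] at hs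
      obtain ⟨⟨hs1, hs2⟩, hge⟩ := hs
      set d := Nat.gcd n s with hd
      have hd0 : 0 < d := Nat.gcd_pos_of_pos_right n (by omega)
      have hdn : d ∣ n := Nat.gcd_dvd_left n s
      have hds : d ∣ s := Nat.gcd_dvd_right n s
      have hdles : d ≤ s := Nat.le_of_dvd (by omega) hds
      simp only [hT, Finset.mem_coe, Finset.mem_sigma, Finset.mem_Icc]
      refine ⟨⟨?_, ?_⟩, ?_, ?_⟩
      · exact (Nat.le_div_iff_mul_le hd0).mpr (by omega)
      · calc n / d ≤ d * r / d := Nat.div_le_div_right hge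
          _ = r := Nat.mul_div_cancel_left r hd0
      · exact (Nat.le_div_iff_mul_le hd0).mpr (by omega)
      · rw [Nat.div_div_eq_div_mul]
        have : s / d ≤ n / 2 / d := Nat.div_le_div_right hs2
        rwa [Nat.div_div_eq_div_mul, mul_comm 2 d] at this
    · intro s hs t ht h
      simp only [hB, Finset.mem_coe, Finset.mem_filter, Finset.mem_Icc, not_lt] at hs ht
      obtain ⟨⟨hs1, _⟩, _⟩ := hs
      obtain ⟨⟨ht1, _⟩, _⟩ := ht
      have hds : Nat.gcd n s ∣ n := Nat.gcd_dvd_left n s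
      have hdt : Nat.gcd n t ∣ n := Nat.gcd_dvd_left n t
      have hds0 : 0 < Nat.gcd n s := Nat.gcd_pos_of_pos_right n (by omega)
      have hdt0 : 0 < Nat.gcd n t := Nat.gcd_pos_of_pos_right n (by omega)
      have h1 : n / Nat.gcd n s = n / Nat.gcd n t := congrArg Sigma.fst h
      have h2 : s / Nat.gcd n s = t / Nat.gcd n t := by
        simpa using (Sigma.mk.inj_iff.mp h).2
      have hdeq : Nat.gcd n s = Nat.gcd n t := by
        have e1 : Nat.gcd n s * (n / Nat.gcd n s) = n := Nat.mul_div_cancel' hds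
        have e2 : Nat.gcd n t * (n / Nat.gcd n t) = n := Nat.mul_div_cancel' hdt
        rw [h1] at e1
        have hq0 : 0 < n / Nat.gcd n t := Nat.div_pos (Nat.le_of_dvd (by omega) hdt) hdt0
        exact Nat.eq_of_mul_eq_mul_right hq0 (e1.trans e2.symm)
      calc s = s / Nat.gcd n s * Nat.gcd n s := (Nat.div_mul_cancel (Nat.gcd_dvd_right n s)).symm
        _ = t / Nat.gcd n t * Nat.gcd n t := by rw [h2, hdeq]
        _ = t := Nat.div_mul_cancel (Nat.gcd_dvd_right n t)
  have hcardT : T.card = ∑ e ∈ Finset.Icc 2 r, (e / 2) := by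
    rw [hT, Finset.card_sigma]
    exact Finset.sum_congr rfl fun e _ => by rw [Nat.card_Icc]; omega
  calc Bad.card * 4 ≤ T.card * 4 := by omega
    _ = (∑ e ∈ Finset.Icc 2 r, e / 2) * 4 := by rw [hcardT]
    _ ≤ (r + 1) ^ 2 - 2 := sum_halves_le hr

/-- For i.i.d. Bernoulli(p) and `2 ≤ r ≤ n`, with
`Ĩ = ∑_{(a,s)∈B̃_n} P(Ã_{a,s})` where
`Ã_{a,s} = {ξ_a = 0, ξ_{a+s mod n} = 1, …, ξ_{a+rs mod n} = 1}`, one has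
`(1 − (r+1)²/(2n)) · qn²pʳ/2 ≤ Ĩ ≤ qn²pʳ/2`, `q = 1 − p`. -/
theorem stmt14 {Ω : Type*} [MeasurableSpace Ω] (μ : Measure Ω) [IsProbabilityMeasure μ]
    (p : ℝ) (hp0 : 0 < p) (hp1 : p < 1) (n r : ℕ) (hr : 2 ≤ r) (hrn : r ≤ n)
    (ξ : ℕ → Ω → Bool) (hmeas : ∀ i, Measurable (ξ i))
    (hindep : iIndepFun ξ μ)
    (hbern : ∀ i, μ {ω | ξ i ω = true} = ENNReal.ofReal p) :
    (1 - ((r : ℝ) + 1) ^ 2 / (2 * n)) * ((1 - p) * (n : ℝ) ^ 2 * p ^ r / 2) ≤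
      (∑ q ∈ Btilde n r,
        (μ {ω | ξ q.1 ω = false ∧
            ∀ j : ℕ, 1 ≤ j → j ≤ r → ξ (amod (q.1 + j * q.2) n) ω = true}).toReal) ∧
    (∑ q ∈ Btilde n r,
        (μ {ω | ξ q.1 ω = false ∧
            ∀ j : ℕ, 1 ≤ j → j ≤ r → ξ (amod (q.1 + j * q.2) n) ω = true}).toReal) ≤
      (1 - p) * (n : ℝ) ^ 2 * p ^ r / 2 := by
  have hn2 : 2 ≤ n := le_trans hr hrn
  have hn0 : 0 < n := by omega
  -- each term equals (1-p) * p^r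
  have hterm : ∀ q ∈ Btilde n r,
      (μ {ω | ξ q.1 ω = false ∧
        ∀ j : ℕ, 1 ≤ j → j ≤ r → ξ (amod (q.1 + j * q.2) n) ω = true}).toReal
      = (1 - p) * p ^ r := by
    rintro ⟨a, s⟩ hq
    simp only [Btilde, Finset.mem_filter, Finset.mem_product, Finset.mem_Icc] at hq
    obtain ⟨⟨⟨ha1, han⟩, ⟨hs1, hsn⟩⟩, hgcd⟩ := hq
    have hinj := g_injOn (a := a) hn0 hs1 hgcd
    have hg0 : amod (a + 0 * s) n = a := by
      rw [Nat.zero_mul, Nat.add_zero]; exact amod_self ha1 han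
    have hmeq := meas_event μ p (le_of_lt hp0) r ξ hmeas hindep hbern
      (fun j => amod (a + j * s) n) hinj
    simp only [hg0] at hmeq
    rw [hmeq, ENNReal.toReal_mul, ENNReal.toReal_pow,
      ENNReal.toReal_ofReal (by linarith), ENNReal.toReal_ofReal (le_of_lt hp0)]
  rw [Finset.sum_congr rfl hterm, Finset.sum_const, nsmul_eq_mul]
  -- cardinality of Btilde
  set Good := (Finset.Icc 1 (n / 2)).filter (fun s => Nat.gcd n s * r < n) with hG
  have hBt : Btilde n r = Finset.Icc 1 n ×ˢ Good := by
    ext ⟨a, s⟩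
    simp only [Btilde, hG, Finset.mem_filter, Finset.mem_product, Finset.mem_Icc]
    tauto
  have hcard : (Btilde n r).card = n * Good.card := by
    rw [hBt, Finset.card_product, Nat.card_Icc]
    congr 1
  set Bad := (Finset.Icc 1 (n / 2)).filter (fun s => ¬ Nat.gcd n s * r < n) with hBad
  have hsplit : Good.card + Bad.card = n / 2 := by
    rw [hG, hBad, Finset.card_filter_add_card_filter_not, Nat.card_Icc]
    omega
  have hbad4 : Bad.card * 4 ≤ (r + 1) ^ 2 - 2 := bad_card hr hn2
  -- real-number estimates
  have hc : (0 : ℝ) ≤ (1 - p) * p ^ r := by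
    have := pow_nonneg (le_of_lt hp0) r
    nlinarith
  have hfloor1 : ((n : ℝ) - 1) / 2 ≤ ((n / 2 : ℕ) : ℝ) := by
    have : n ≤ 2 * (n / 2) + 1 := by omega
    have h2 : (n : ℝ) ≤ 2 * ((n / 2 : ℕ) : ℝ) + 1 := by exact_mod_cast this
    linarith
  have hfloor2 : ((n / 2 : ℕ) : ℝ) ≤ (n : ℝ) / 2 := by
    have : 2 * (n / 2) ≤ n := Nat.mul_div_le n 2 |>.trans_eq rfl
    have h2 : 2 * ((n / 2 : ℕ) : ℝ) ≤ (n : ℝ) := by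
      exact_mod_cast Nat.mul_div_le n 2
    linarith
  have hbadR : (Bad.card : ℝ) * 4 ≤ ((r : ℝ) + 1) ^ 2 - 2 := by
    have h2 : 2 ≤ (r + 1) ^ 2 := by nlinarith
    have := hbad4
    have hcast : ((Bad.card * 4 : ℕ) : ℝ) ≤ (((r + 1) ^ 2 - 2 : ℕ) : ℝ) := by
      exact_mod_cast this
    rw [Nat.cast_sub h2] at hcast
    push_cast at hcast
    linarith
  have hGR : ((Good.card : ℝ)) = ((n / 2 : ℕ) : ℝ) - (Bad.card : ℝ) := by
    have : (Good.card : ℝ) + (Bad.card : ℝ) = ((n / 2 : ℕ) : ℝ) := by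
      exact_mod_cast hsplit
    linarith
  have hcardR : ((Btilde n r).card : ℝ) = (n : ℝ) * (Good.card : ℝ) := by
    exact_mod_cast hcard
  rw [hcardR]
  have hnR : (2 : ℝ) ≤ (n : ℝ) := by exact_mod_cast hn2
  constructor
  · -- lower bound
    have hkey : (n : ℝ) ^ 2 / 2 - ((r : ℝ) + 1) ^ 2 * n / 4 ≤ (n : ℝ) * (Good.card : ℝ) := by
      rw [hGR]
      nlinarith [hfloor1, hbadR, hnR]
    have hlhs : (1 - ((r : ℝ) + 1) ^ 2 / (2 * n)) * ((1 - p) * (n : ℝ) ^ 2 * p ^ r / 2)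
        = ((n : ℝ) ^ 2 / 2 - ((r : ℝ) + 1) ^ 2 * n / 4) * ((1 - p) * p ^ r) := by
      field_simp
      ring
    rw [hlhs]
    exact mul_le_mul_of_nonneg_right hkey hc
  · -- upper bound
    have hkey : (n : ℝ) * (Good.card : ℝ) ≤ (n : ℝ) ^ 2 / 2 := by
      have hGle : (Good.card : ℝ) ≤ ((n / 2 : ℕ) : ℝ) := by
        have : Good.card ≤ n / 2 := by omega
        exact_mod_cast this
      nlinarith [hfloor2]
    calc (n : ℝ) * (Good.card : ℝ) * ((1 - p) * p ^ r)
        ≤ (n : ℝ) ^ 2 / 2 * ((1 - p) * p ^ r) := mul_le_mul_of_nonneg_right hkey hc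
      _ = (1 - p) * (n : ℝ) ^ 2 * p ^ r / 2 := by ring
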